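/- Let 0 < a² < 1, c, b ∈ ℝ, and define g(u) = (a/(1−a²))·√(u² − (a·u + c)²) + (c/(1−a²)^{3/2})·ln(√(1−a²)·u − a·c/√(1−a²) + √(u² − (a·u + c)²)) + b on an interval where u² − (a·u+c)² > 0 and the logarithm argument is positive. Then g′(u) = (a·u + c)/√(u² − (a·u + c)²). -/

import Mathlib

/-- The explicit meridian of a marginally trapped meridian surface M″_m:
g(u) = (a/(1−a²))√(u²−(au+c)²) + (c/(1−a²)^{3/2})·ln(√(1−a²)u − ac/√(1−a²) + √(u²−(au+c)²)) + b
has derivative g′(u) = (au+c)/√(u²−(au+c)²). -/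
theorem stmt_14 (a c b : ℝ) (ha : 0 < a ^ 2) (ha1 : a ^ 2 < 1) (g : ℝ → ℝ)
    (hg : ∀ u : ℝ, g u =
      a / (1 - a ^ 2) * Real.sqrt (u ^ 2 - (a * u + c) ^ 2) +
      c / (1 - a ^ 2) ^ ((3 : ℝ) / 2) *
        Real.log (Real.sqrt (1 - a ^ 2) * u - a * c / Real.sqrt (1 - a ^ 2) +
          Real.sqrt (u ^ 2 - (a * u + c) ^ 2)) + b) :
    ∀ u : ℝ, 0 < u → 0 < u ^ 2 - (a * u + c) ^ 2 →
      0 < Real.sqrt (1 - a ^ 2) * u - a * c / Real.sqrt (1 - a ^ 2) +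
          Real.sqrt (u ^ 2 - (a * u + c) ^ 2) →
      HasDerivAt g ((a * u + c) / Real.sqrt (u ^ 2 - (a * u + c) ^ 2)) u := by
  intro u hu hQ hL
  have h1 : (0:ℝ) < 1 - a ^ 2 := by linarith
  set s := Real.sqrt (1 - a ^ 2) with hs_def
  have hs2 : s ^ 2 = 1 - a ^ 2 := Real.sq_sqrt h1.le
  have hspos : 0 < s := Real.sqrt_pos.mpr h1
  have hsne : s ≠ 0 := ne_of_gt hspos
  have hQne : u ^ 2 - (a * u + c) ^ 2 ≠ 0 := ne_of_gt hQ
  have hsqQ : 0 < Real.sqrt (u ^ 2 - (a * u + c) ^ 2) := Real.sqrt_pos.mpr hQ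
  have hsqQne : Real.sqrt (u ^ 2 - (a * u + c) ^ 2) ≠ 0 := ne_of_gt hsqQ
  have hsqQ2 : Real.sqrt (u ^ 2 - (a * u + c) ^ 2) ^ 2 = u ^ 2 - (a * u + c) ^ 2 :=
    Real.sq_sqrt hQ.le
  have hLne : s * u - a * c / s + Real.sqrt (u ^ 2 - (a * u + c) ^ 2) ≠ 0 := ne_of_gt hL
  -- derivative of the inner quadratic
  have hlin : HasDerivAt (fun x : ℝ => a * x + c) a u := by
    simpa using ((hasDerivAt_id u).const_mul a).add_const c
  have hQd : HasDerivAt (fun x : ℝ => x ^ 2 - (a * x + c) ^ 2)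
      (2 * u - 2 * (a * u + c) * a) u := by
    have := (hasDerivAt_pow 2 u).sub (hlin.pow 2)
    exact this.congr_deriv (by norm_num)
  have hsqrt : HasDerivAt (fun x : ℝ => Real.sqrt (x ^ 2 - (a * x + c) ^ 2))
      ((2 * u - 2 * (a * u + c) * a) / (2 * Real.sqrt (u ^ 2 - (a * u + c) ^ 2))) u :=
    hQd.sqrt hQne
  have hlinL : HasDerivAt (fun x : ℝ => s * x - a * c / s +
      Real.sqrt (x ^ 2 - (a * x + c) ^ 2))
      (s + (2 * u - 2 * (a * u + c) * a) / (2 * Real.sqrt (u ^ 2 - (a * u + c) ^ 2))) u := by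
    have h := (((hasDerivAt_id u).const_mul s).sub_const (a * c / s)).add hsqrt
    exact h.congr_deriv (by ring)
  have hlog := hlinL.log hLne
  have hsum := ((hsqrt.const_mul (a / (1 - a ^ 2))).add
      (hlog.const_mul (c / (1 - a ^ 2) ^ ((3:ℝ)/2)))).add_const b
  have hgfun : g = fun x : ℝ =>
      a / (1 - a ^ 2) * Real.sqrt (x ^ 2 - (a * x + c) ^ 2) +
      c / (1 - a ^ 2) ^ ((3 : ℝ) / 2) *
        Real.log (s * x - a * c / s +
          Real.sqrt (x ^ 2 - (a * x + c) ^ 2)) + b := funext hg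
  rw [hgfun]
  refine hsum.congr_deriv (Eq.symm ?_)
  -- algebraic identity for the derivative value
  have h32 : (1 - a ^ 2) ^ ((3:ℝ)/2) = (1 - a ^ 2) * s := by
    rw [show ((3:ℝ)/2) = 1 + 1/2 by norm_num, Real.rpow_add h1, Real.rpow_one,
      hs_def, Real.sqrt_eq_rpow]
  rw [h32]
  set r := Real.sqrt (u ^ 2 - (a * u + c) ^ 2) with hr_def
  have key : s + (2 * u - 2 * (a * u + c) * a) / (2 * r) = s * (s * u - a * c / s + r) / r := by
    field_simp
    linear_combination (-u) * hs2
  rw [key]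
  have hred : s * (s * u - a * c / s + r) / r / (s * u - a * c / s + r) = s / r := by
    rw [div_div, mul_comm r, ← div_div, mul_div_assoc, div_self hLne, mul_one]
  rw [hred]
  have h1ne : (1 - a ^ 2) ≠ 0 := ne_of_gt h1
  field_simp
  ring
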